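/- arXiv:1910.12529 — 3 statements merged into one kernel-verified Lean document; each statement's English description precedes it below -/
import Mathlib

section
/- The integral over the real line ∫_ℝ (i − 3x)/((x − i)⁴(x + i)³) dx equals −π/2. -/
open Complex Real Filter MeasureTheory Topology

lemma stmt6_I2 : I ^ 2 = -1 := Complex.I_sq
lemma stmt6_I3 : I ^ 3 = -I := by
  rw [pow_succ, stmt6_I2]
  simp [Complex.I_mul_I]
lemma stmt6_I4 : I ^ 4 = 1 := by
  rw [pow_succ, stmt6_I3]
  simp [Complex.I_mul_I]
lemma stmt6_I5 : I ^ 5 = I := by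
  rw [pow_succ, stmt6_I4]
  simp [Complex.I_mul_I]
lemma stmt6_I6 : I ^ 6 = -1 := by
  rw [pow_succ, stmt6_I5]
  simp [Complex.I_mul_I]
lemma stmt6_I7 : I ^ 7 = -I := by
  rw [pow_succ, stmt6_I6]
  simp [Complex.I_mul_I]
lemma stmt6_I8 : I ^ 8 = 1 := by
  rw [pow_succ, stmt6_I7]
  simp [Complex.I_mul_I]
lemma stmt6_I9 : I ^ 9 = I := by
  rw [pow_succ, stmt6_I8]
  simp [Complex.I_mul_I]
lemma stmt6_I10 : I ^ 10 = -1 := by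
  rw [pow_succ, stmt6_I9]
  simp [Complex.I_mul_I]
lemma stmt6_I11 : I ^ 11 = -I := by
  rw [pow_succ, stmt6_I10]
  simp [Complex.I_mul_I]
lemma stmt6_I12 : I ^ 12 = 1 := by
  rw [pow_succ, stmt6_I11]
  simp [Complex.I_mul_I]
lemma stmt6_I13 : I ^ 13 = I := by
  rw [pow_succ, stmt6_I12]
  simp [Complex.I_mul_I]
lemma stmt6_I14 : I ^ 14 = -1 := by
  rw [pow_succ, stmt6_I13]
  simp [Complex.I_mul_I]
lemma stmt6_I15 : I ^ 15 = -I := by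
  rw [pow_succ, stmt6_I14]
  simp [Complex.I_mul_I]
lemma stmt6_I16 : I ^ 16 = 1 := by
  rw [pow_succ, stmt6_I15]
  simp [Complex.I_mul_I]
lemma stmt6_I17 : I ^ 17 = I := by
  rw [pow_succ, stmt6_I16]
  simp [Complex.I_mul_I]
lemma stmt6_I18 : I ^ 18 = -1 := by
  rw [pow_succ, stmt6_I17]
  simp [Complex.I_mul_I]
lemma stmt6_I19 : I ^ 19 = -I := by
  rw [pow_succ, stmt6_I18]
  simp [Complex.I_mul_I]
lemma stmt6_I20 : I ^ 20 = 1 := by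
  rw [pow_succ, stmt6_I19]
  simp [Complex.I_mul_I]

noncomputable def stmt6G : ℂ → ℂ := fun z =>
  (2 + 5 * I * z - 5 * z ^ 2 + 3 * I * z ^ 3 - 3 * z ^ 4) / (6 * ((z - I) ^ 3 * (z + I) ^ 2))

lemma stmt6_sub_ne (x : ℝ) : (x : ℂ) - I ≠ 0 := by
  intro h
  have := congrArg Complex.im h
  simp at this

lemma stmt6_add_ne (x : ℝ) : (x : ℂ) + I ≠ 0 := by
  intro h
  have := congrArg Complex.im h
  simp at this

lemma stmt6_deriv (x : ℝ) :
    HasDerivAt (fun t : ℝ => stmt6G t)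
      ((I - 3 * (x : ℂ)) / (((x : ℂ) - I) ^ 4 * ((x : ℂ) + I) ^ 3)
        + (1 / 2 : ℂ) / ((x : ℂ) ^ 2 + 1)) x := by
  set z : ℂ := (x : ℂ)
  have hm : z - I ≠ 0 := stmt6_sub_ne x
  have hp : z + I ≠ 0 := stmt6_add_ne x
  have hden : (6 : ℂ) * ((z - I) ^ 3 * (z + I) ^ 2) ≠ 0 := by
    apply mul_ne_zero (by norm_num)
    exact mul_ne_zero (pow_ne_zero _ hm) (pow_ne_zero _ hp)
  have hnum : HasDerivAt (fun w : ℂ => 2 + 5 * I * w - 5 * w ^ 2 + 3 * I * w ^ 3 - 3 * w ^ 4)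
      (5 * I - 5 * (2 * z) + 3 * I * (3 * z ^ 2) - 3 * (4 * z ^ 3)) z := by
    have h0 := (hasDerivAt_const z (2 : ℂ)).add ((hasDerivAt_id z).const_mul (5 * I))
    have h2 := (hasDerivAt_pow 2 z).const_mul (5 : ℂ)
    have h3 := (hasDerivAt_pow 3 z).const_mul (3 * I)
    have h4 := (hasDerivAt_pow 4 z).const_mul (3 : ℂ)
    have := ((h0.sub h2).add h3).sub h4
    convert this using 1
    · rfl
    · rfl
    · funext w; rfl
    push_cast
    ring
  have hd : HasDerivAt (fun w : ℂ => 6 * ((w - I) ^ 3 * (w + I) ^ 2))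
      (6 * ((3 * (z - I) ^ 2 * 1) * (z + I) ^ 2 + (z - I) ^ 3 * (2 * (z + I) ^ 1 * 1))) z := by
    have hm' : HasDerivAt (fun w : ℂ => w - I) 1 z := (hasDerivAt_id z).sub_const I
    have hp' : HasDerivAt (fun w : ℂ => w + I) 1 z := (hasDerivAt_id z).add_const I
    exact ((hm'.pow 3).mul (hp'.pow 2)).const_mul 6
  have hdiv := hnum.div hd hden
  have := hdiv.comp_ofReal
  convert this using 1
  · funext t; rfl
  have h1 : z ^ 2 + 1 ≠ 0 := by
    intro h
    apply hm
    have h2 : (z - I) * (z + I) = 0 := by linear_combination h - Complex.I_sq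
    rcases mul_eq_zero.1 h2 with h' | h'
    · exact h'
    · exact absurd h' hp
  field_simp
  ring_nf
  simp only [stmt6_I2, stmt6_I3, stmt6_I4, stmt6_I5, stmt6_I6, stmt6_I7, stmt6_I8, stmt6_I9, stmt6_I10, stmt6_I11, stmt6_I12, stmt6_I13, stmt6_I14, stmt6_I15, stmt6_I16, stmt6_I17, stmt6_I18, stmt6_I19, stmt6_I20]
  ring

lemma stmt6_norm_sq (x : ℝ) : ‖(x : ℂ) - I‖ ^ 2 = x ^ 2 + 1 := by
  rw [Complex.sq_norm, Complex.normSq_apply]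
  simp
  ring

lemma stmt6_integrable :
    Integrable fun x : ℝ =>
      (I - 3 * (x : ℂ)) / (((x : ℂ) - I) ^ 4 * ((x : ℂ) + I) ^ 3) := by
  have hcont : Continuous fun x : ℝ =>
      (I - 3 * (x : ℂ)) / (((x : ℂ) - I) ^ 4 * ((x : ℂ) + I) ^ 3) := by
    apply Continuous.div
    · fun_prop
    · fun_prop
    · intro x
      exact mul_ne_zero (pow_ne_zero _ (stmt6_sub_ne x)) (pow_ne_zero _ (stmt6_add_ne x))
  refine (integrable_inv_one_add_sq.const_mul 3).mono' hcont.aestronglyMeasurable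
    (Filter.Eventually.of_forall fun x => ?_)
  have hfac : ((x : ℂ) - I) ^ 4 * ((x : ℂ) + I) ^ 3
      = (((x : ℝ) ^ 2 + 1 : ℝ) : ℂ) ^ 3 * ((x : ℂ) - I) := by
    push_cast
    ring_nf
    simp only [stmt6_I2, stmt6_I3, stmt6_I4, stmt6_I5, stmt6_I6, stmt6_I7, stmt6_I8, stmt6_I9, stmt6_I10, stmt6_I11, stmt6_I12, stmt6_I13, stmt6_I14, stmt6_I15, stmt6_I16, stmt6_I17, stmt6_I18, stmt6_I19, stmt6_I20]
    ring
  have h1 : (0:ℝ) < x ^ 2 + 1 := by positivity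
  have hsub : (1:ℝ) ≤ ‖(x : ℂ) - I‖ := by
    nlinarith [stmt6_norm_sq x, norm_nonneg ((x : ℂ) - I), sq_nonneg x]
  have hnum : ‖I - 3 * (x : ℂ)‖ ≤ 1 + 3 * |x| := by
    calc ‖I - 3 * (x : ℂ)‖ ≤ ‖I‖ + ‖3 * (x : ℂ)‖ := norm_sub_le _ _
    _ = 1 + 3 * |x| := by
        rw [Complex.norm_I, norm_mul]
        simp [Complex.norm_real]
  rw [norm_div, hfac, norm_mul, norm_pow, Complex.norm_real]
  have h2 : ‖(x ^ 2 + 1 : ℝ)‖ = x ^ 2 + 1 := by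
    rw [Real.norm_eq_abs, abs_of_pos h1]
  rw [h2]
  have hdenpos : (0:ℝ) < (x ^ 2 + 1) ^ 3 * ‖(x : ℂ) - I‖ := by positivity
  rw [div_le_iff₀ hdenpos]
  have hb : 1 + 3 * |x| ≤ 3 * (x ^ 2 + 1) := by nlinarith [sq_nonneg (2 * |x| - 1), _root_.sq_abs x]
  have h3 : (0:ℝ) ≤ |x| := abs_nonneg x
  calc ‖I - 3 * (x : ℂ)‖ ≤ 1 + 3 * |x| := hnum
    _ ≤ 3 * (1 + x ^ 2)⁻¹ * ((x ^ 2 + 1) ^ 3 * ‖(x : ℂ) - I‖) := by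
        rw [show (1 + x ^ 2) = (x ^ 2 + 1) by ring]
        have key : 3 * (x ^ 2 + 1)⁻¹ * ((x ^ 2 + 1) ^ 3 * ‖(x : ℂ) - I‖)
            = 3 * ((x ^ 2 + 1) ^ 2 * ‖(x : ℂ) - I‖) := by
          field_simp
        rw [key]
        nlinarith [sq_nonneg x, norm_nonneg ((x : ℂ) - I)]

noncomputable def stmt6phi : ℂ → ℂ := fun t =>
  (2 * t ^ 5 + 5 * I * t ^ 4 - 5 * t ^ 3 + 3 * I * t ^ 2 - 3 * t) /
    (6 * ((1 - I * t) ^ 3 * (1 + I * t) ^ 2))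

lemma stmt6_G_eq (x : ℝ) (hx : x ≠ 0) : stmt6G x = stmt6phi ((x : ℂ))⁻¹ := by
  have hxc : (x : ℂ) ≠ 0 := Complex.ofReal_ne_zero.2 hx
  unfold stmt6G stmt6phi
  have hm : (x : ℂ) - I ≠ 0 := stmt6_sub_ne x
  have hp : (x : ℂ) + I ≠ 0 := stmt6_add_ne x
  have e1 : 1 - I * ((x : ℂ))⁻¹ = ((x : ℂ) - I) / x := by field_simp
  have e2 : 1 + I * ((x : ℂ))⁻¹ = ((x : ℂ) + I) / x := by field_simp
  rw [e1, e2, div_pow, div_pow]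
  rw [show (6:ℂ) * (((x : ℂ) - I) ^ 3 / (x:ℂ) ^ 3 * (((x : ℂ) + I) ^ 2 / (x:ℂ) ^ 2))
      = 6 * (((x : ℂ) - I) ^ 3 * ((x : ℂ) + I) ^ 2) / (x:ℂ) ^ 5 from by ring]
  rw [div_div_eq_mul_div]
  congr 1
  have ht : ((x : ℂ))⁻¹ * (x : ℂ) = 1 := inv_mul_cancel₀ hxc
  set t : ℂ := ((x : ℂ))⁻¹ with hts
  linear_combination
    (-(2 * (x:ℂ)^4 * t^4 + (5*I*(x:ℂ)^4 + 2*(x:ℂ)^3) * t^3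
      + (-5*(x:ℂ)^4 + 5*I*(x:ℂ)^3 + 2*(x:ℂ)^2) * t^2
      + (3*I*(x:ℂ)^4 - 5*(x:ℂ)^3 + 5*I*(x:ℂ)^2 + 2*(x:ℂ)) * t
      + (-3*(x:ℂ)^4 + 3*I*(x:ℂ)^3 - 5*(x:ℂ)^2 + 5*I*(x:ℂ) + 2))) * ht

lemma stmt6_phi_cont : ContinuousAt stmt6phi 0 := by
  apply ContinuousAt.div
  · fun_prop
  · fun_prop
  · norm_num

lemma stmt6_tendsto_top : Tendsto (fun x : ℝ => stmt6G x) atTop (𝓝 0) := by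
  have h1 : Tendsto (fun x : ℝ => ((x : ℂ))⁻¹) atTop (𝓝 0) := by
    have : Tendsto (fun x : ℝ => ((x⁻¹ : ℝ) : ℂ)) atTop (𝓝 ((0 : ℝ) : ℂ)) :=
      (Complex.continuous_ofReal.tendsto _).comp tendsto_inv_atTop_zero
    simpa using this
  have h2 : Tendsto (fun x : ℝ => stmt6phi ((x : ℂ))⁻¹) atTop (𝓝 (stmt6phi 0)) :=
    stmt6_phi_cont.tendsto.comp h1
  have h3 : stmt6phi 0 = 0 := by unfold stmt6phi; norm_num
  rw [h3] at h2
  refine h2.congr' ?_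
  filter_upwards [eventually_gt_atTop (0:ℝ)] with x hx
  exact (stmt6_G_eq x hx.ne').symm

lemma stmt6_tendsto_bot : Tendsto (fun x : ℝ => stmt6G x) atBot (𝓝 0) := by
  have h0 : Tendsto (fun x : ℝ => x⁻¹) atBot (𝓝 0) := by
    have := (tendsto_inv_atTop_zero (𝕜 := ℝ)).comp tendsto_neg_atBot_atTop
    have h := this.neg
    simp only [Function.comp_def, neg_zero] at h
    refine h.congr fun x => ?_
    rw [← inv_neg, neg_neg]
  have h1 : Tendsto (fun x : ℝ => ((x : ℂ))⁻¹) atBot (𝓝 0) := by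
    have : Tendsto (fun x : ℝ => ((x⁻¹ : ℝ) : ℂ)) atBot (𝓝 ((0 : ℝ) : ℂ)) :=
      (Complex.continuous_ofReal.tendsto _).comp h0
    simpa using this
  have h2 : Tendsto (fun x : ℝ => stmt6phi ((x : ℂ))⁻¹) atBot (𝓝 (stmt6phi 0)) :=
    stmt6_phi_cont.tendsto.comp h1
  have h3 : stmt6phi 0 = 0 := by unfold stmt6phi; norm_num
  rw [h3] at h2
  refine h2.congr' ?_
  filter_upwards [eventually_lt_atBot (0:ℝ)] with x hx
  exact (stmt6_G_eq x hx.ne).symm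

lemma stmt6_half_integrable :
    Integrable fun x : ℝ => (1 / 2 : ℂ) / ((x : ℂ) ^ 2 + 1) := by
  have : (fun x : ℝ => (1 / 2 : ℂ) / ((x : ℂ) ^ 2 + 1))
      = fun x : ℝ => (((1 / 2) * (1 + x ^ 2)⁻¹ : ℝ) : ℂ) := by
    funext x
    push_cast
    rw [div_eq_mul_inv]
    ring_nf
  rw [this]
  exact (integrable_inv_one_add_sq.const_mul (1/2)).ofReal

theorem stmt_6 :
    ∫ x : ℝ, (I - 3 * (x : ℂ)) / (((x : ℂ) - I) ^ 4 * ((x : ℂ) + I) ^ 3) = -((Real.pi : ℂ) / 2) := by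
  have hint := stmt6_integrable
  have hhalf := stmt6_half_integrable
  have hsum := hint.add hhalf
  have hFTC : ∫ x : ℝ, ((I - 3 * (x : ℂ)) / (((x : ℂ) - I) ^ 4 * ((x : ℂ) + I) ^ 3)
      + (1 / 2 : ℂ) / ((x : ℂ) ^ 2 + 1)) = 0 := by
    have := MeasureTheory.integral_of_hasDerivAt_of_tendsto stmt6_deriv hsum
      stmt6_tendsto_bot stmt6_tendsto_top
    simpa using this
  have hsplit := MeasureTheory.integral_add hint hhalf
  rw [hFTC] at hsplit
  have hhalfval : ∫ x : ℝ, (1 / 2 : ℂ) / ((x : ℂ) ^ 2 + 1) = (Real.pi : ℂ) / 2 := by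
    have : (fun x : ℝ => (1 / 2 : ℂ) / ((x : ℂ) ^ 2 + 1))
        = fun x : ℝ => (((1 / 2) * (1 + x ^ 2)⁻¹ : ℝ) : ℂ) := by
      funext x
      push_cast
      rw [div_eq_mul_inv]
      ring_nf
    rw [this]
    have h4 : ∫ (x : ℝ), ((1 / 2 * (1 + x ^ 2)⁻¹ : ℝ) : ℂ)
        = ((∫ (x : ℝ), 1 / 2 * (1 + x ^ 2)⁻¹ : ℝ) : ℂ) := integral_ofReal
    rw [h4, MeasureTheory.integral_const_mul, integral_univ_inv_one_add_sq]
    push_cast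
    ring
  rw [hhalfval] at hsplit
  linear_combination -hsplit
end

section
/- The integral over the real line ∫_ℝ ((3/4)i + 2 + (3 + 4i)x + (−6 + 2i)x² + 3x³ + (9/4)ix⁴)/((x − i)⁵(x + i)⁴) dx equals −19π/128 + (15/32)πi. -/
open Complex Real

open MeasureTheory Filter Topology

lemma aux_one_le (w : ℂ) (him : w.im = 1 ∨ w.im = -1) (x : ℝ) :
    1 ≤ ‖(x : ℂ) + w‖ := by
  have h : |((x : ℂ) + w).im| = 1 := by
    rcases him with h | h <;> simp [h]
  calc 1 = |((x : ℂ) + w).im| := h.symm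
    _ ≤ ‖(x : ℂ) + w‖ := Complex.abs_im_le_norm _
    _ = ‖(x : ℂ) + w‖ := rfl

lemma aux_abs_le (w : ℂ) (hre : w.re = 0) (x : ℝ) :
    |x| ≤ ‖(x : ℂ) + w‖ := by
  have h : ((x : ℂ) + w).re = x := by simp [hre]
  calc |x| = |((x : ℂ) + w).re| := by rw [h]
    _ ≤ ‖(x : ℂ) + w‖ := Complex.abs_re_le_norm _
    _ = ‖(x : ℂ) + w‖ := rfl

lemma aux_ne_zero (w : ℂ) (him : w.im = 1 ∨ w.im = -1) (x : ℝ) :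
    (x : ℂ) + w ≠ 0 := by
  intro h
  have := aux_one_le w him x
  rw [h] at this
  norm_num at this

lemma aux_sq_norm (w : ℂ) (hre : w.re = 0) (him : w.im = 1 ∨ w.im = -1) (x : ℝ) :
    ‖(x : ℂ) + w‖ ^ 2 = 1 + x ^ 2 := by
  have h : ‖(x : ℂ) + w‖ ^ 2 = Complex.normSq ((x : ℂ) + w) := Complex.sq_norm _
  rw [h, Complex.normSq_apply]
  rcases him with h' | h' <;> simp [h', hre] <;> ring

lemma aux_integrable (w : ℂ) (hre : w.re = 0) (him : w.im = 1 ∨ w.im = -1)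
    (m : ℕ) (hm : 2 ≤ m) :
    Integrable (fun x : ℝ => (((x : ℂ) + w) ^ m)⁻¹) := by
  apply integrable_inv_one_add_sq.mono
  · apply Continuous.aestronglyMeasurable
    apply Continuous.inv₀
    · exact (Complex.continuous_ofReal.add continuous_const).pow m
    · intro x
      exact pow_ne_zero m (aux_ne_zero w him x)
  · filter_upwards with x
    have h1 : 1 ≤ ‖(x : ℂ) + w‖ := aux_one_le w him x
    have h2 : ‖(x : ℂ) + w‖ ^ 2 = 1 + x ^ 2 := aux_sq_norm w hre him x
    have hpos : (0:ℝ) < 1 + x ^ 2 := by positivity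
    rw [norm_inv, norm_pow, Real.norm_eq_abs, abs_of_pos (inv_pos.2 hpos)]
    rw [inv_le_inv₀ (by positivity) hpos]
    calc 1 + x ^ 2 = ‖(x : ℂ) + w‖ ^ 2 := h2.symm
      _ ≤ ‖(x : ℂ) + w‖ ^ m := pow_le_pow_right₀ h1 hm

lemma aux_tendsto_atTop (w : ℂ) (hre : w.re = 0) (him : w.im = 1 ∨ w.im = -1)
    (m : ℕ) (hm : 1 ≤ m) :
    Tendsto (fun x : ℝ => (((x : ℂ) + w) ^ m)⁻¹) atTop (𝓝 0) := by
  apply squeeze_zero_norm' (a := fun x : ℝ => x⁻¹)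
  · filter_upwards [eventually_ge_atTop (1:ℝ)] with x hx
    have h1 : 1 ≤ ‖(x : ℂ) + w‖ := aux_one_le w him x
    have h2 : x ≤ ‖(x : ℂ) + w‖ := le_trans (le_abs_self x) (aux_abs_le w hre x)
    rw [norm_inv, norm_pow]
    apply inv_anti₀ (by linarith)
    calc x ≤ ‖(x : ℂ) + w‖ := h2
      _ ≤ ‖(x : ℂ) + w‖ ^ m := le_self_pow₀ (by linarith) (by omega)
  · exact tendsto_inv_atTop_zero

lemma aux_tendsto_atBot (w : ℂ) (hre : w.re = 0) (him : w.im = 1 ∨ w.im = -1)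
    (m : ℕ) (hm : 1 ≤ m) :
    Tendsto (fun x : ℝ => (((x : ℂ) + w) ^ m)⁻¹) atBot (𝓝 0) := by
  apply squeeze_zero_norm' (a := fun x : ℝ => (-x)⁻¹)
  · filter_upwards [eventually_le_atBot (-1:ℝ)] with x hx
    have h1 : 1 ≤ ‖(x : ℂ) + w‖ := aux_one_le w him x
    have h2 : -x ≤ ‖(x : ℂ) + w‖ := le_trans (neg_le_abs x) (aux_abs_le w hre x)
    rw [norm_inv, norm_pow]
    apply inv_anti₀ (by linarith)
    calc -x ≤ ‖(x : ℂ) + w‖ := h2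
      _ ≤ ‖(x : ℂ) + w‖ ^ m := le_self_pow₀ (by linarith) (by omega)
  · exact (tendsto_inv_atTop_zero).comp tendsto_neg_atBot_atTop

set_option maxHeartbeats 1000000 in
theorem stmt_15 :
    ∫ x : ℝ, ((3 / 4) * I + 2 + (3 + 4 * I) * (x : ℂ) + (-6 + 2 * I) * (x : ℂ) ^ 2 + 3 * (x : ℂ) ^ 3 + (9 / 4) * I * (x : ℂ) ^ 4) / (((x : ℂ) - I) ^ 5 * ((x : ℂ) + I) ^ 4) = -(19 * (Real.pi : ℂ)) / 128 + (15 / 32) * Real.pi * I := by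
  have hreI : (I : ℂ).re = 0 := Complex.I_re
  have himI : (I : ℂ).im = 1 ∨ (I : ℂ).im = -1 := Or.inl Complex.I_im
  have hreI' : (-I : ℂ).re = 0 := by simp
  have himI' : (-I : ℂ).im = 1 ∨ (-I : ℂ).im = -1 := Or.inr (by simp)
  have h1 : ∀ x : ℝ, (x : ℂ) + -I ≠ 0 := aux_ne_zero (-I) himI'
  have h2 : ∀ x : ℝ, (x : ℂ) + I ≠ 0 := aux_ne_zero I himI
  set f : ℝ → ℂ := fun x : ℝ => ((3 / 4) * I + 2 + (3 + 4 * I) * (x : ℂ) + (-6 + 2 * I) * (x : ℂ) ^ 2 + 3 * (x : ℂ) ^ 3 + (9 / 4) * I * (x : ℂ) ^ 4) / (((x : ℂ) - I) ^ 5 * ((x : ℂ) + I) ^ 4) with hf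
  set F : ℝ → ℂ := fun x : ℝ =>
    (-19/128 + (15/32) * I) * ((Real.arctan x : ℝ) : ℂ)
    + (-1/4 + I/8) * ((x : ℂ) + -I)⁻¹
    + (7/32 * I) * (((x : ℂ) + -I) ^ 2)⁻¹
    + (1/16) * (((x : ℂ) + -I) ^ 3)⁻¹
    + (-1/16 - I/64) * (((x : ℂ) + -I) ^ 4)⁻¹
    + (13/128 + 11/32 * I) * ((x : ℂ) + I)⁻¹
    + (-7/32 + 17/128 * I) * (((x : ℂ) + I) ^ 2)⁻¹
    + (1/96 - I/8) * (((x : ℂ) + I) ^ 3)⁻¹ with hF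
  -- partial fraction decomposition
  have hfeq : f = fun x : ℝ =>
      (-19/128 + (15/32) * I) * (((1 + x ^ 2)⁻¹ : ℝ) : ℂ)
      + (1/4 - I/8) * (((x : ℂ) + -I) ^ 2)⁻¹
      + (-7/16 * I) * (((x : ℂ) + -I) ^ 3)⁻¹
      + (-3/16) * (((x : ℂ) + -I) ^ 4)⁻¹
      + (1/4 + I/16) * (((x : ℂ) + -I) ^ 5)⁻¹
      + (-13/128 - 11/32 * I) * (((x : ℂ) + I) ^ 2)⁻¹
      + (7/16 - 17/64 * I) * (((x : ℂ) + I) ^ 3)⁻¹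
      + (-1/32 + 3/8 * I) * (((x : ℂ) + I) ^ 4)⁻¹ := by
    funext x
    have h1x := h1 x
    have h2x := h2 x
    have hfactor : ((1:ℂ) + (x:ℂ) ^ 2) = ((x : ℂ) + -I) * ((x : ℂ) + I) := by
      linear_combination Complex.I_sq
    have hcast : (((1 + x ^ 2)⁻¹ : ℝ) : ℂ) = (((x : ℂ) + -I) * ((x : ℂ) + I))⁻¹ := by
      push_cast
      rw [hfactor]
    have hnum : (3 / 4) * I + 2 + (3 + 4 * I) * (x : ℂ) + (-6 + 2 * I) * (x : ℂ) ^ 2 + 3 * (x : ℂ) ^ 3 + (9 / 4) * I * (x : ℂ) ^ 4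
        = (-19/128 + (15/32) * I) * ((x:ℂ)+-I)^4 * ((x:ℂ)+I)^3
        + (1/4 - I/8) * ((x:ℂ)+-I)^3 * ((x:ℂ)+I)^4
        + (-7/16*I) * ((x:ℂ)+-I)^2 * ((x:ℂ)+I)^4
        + (-3/16) * ((x:ℂ)+-I) * ((x:ℂ)+I)^4
        + (1/4 + I/16) * ((x:ℂ)+I)^4
        + (-13/128 - 11/32*I) * ((x:ℂ)+-I)^5 * ((x:ℂ)+I)^2
        + (7/16 - 17/64*I) * ((x:ℂ)+-I)^5 * ((x:ℂ)+I)
        + (-1/32 + 3/8*I) * ((x:ℂ)+-I)^5 := by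
      linear_combination ((2/1 : ℂ) + (3/1 : ℂ) * (x:ℂ)^1 + (-6/1 : ℂ) * (x:ℂ)^2 + (3/1 : ℂ) * (x:ℂ)^3 + (-1/4 : ℂ) * (x:ℂ)^4 + (7/32 : ℂ) * (x:ℂ)^5 + (-7/16 : ℂ) * (x:ℂ)^6 + (3/4 : ℂ) * Complex.I^1 + (4/1 : ℂ) * (x:ℂ)^1 * Complex.I^1 + (2/1 : ℂ) * (x:ℂ)^2 * Complex.I^1 + (-1/1 : ℂ) * (x:ℂ)^3 * Complex.I^1 + (83/32 : ℂ) * (x:ℂ)^4 * Complex.I^1 + (11/8 : ℂ) * (x:ℂ)^5 * Complex.I^1 + (-2/1 : ℂ) * Complex.I^2 + (-3/1 : ℂ) * (x:ℂ)^1 * Complex.I^2 + (9/2 : ℂ) * (x:ℂ)^2 * Complex.I^2 + (-41/16 : ℂ) * (x:ℂ)^3 * Complex.I^2 + (-1/16 : ℂ) * (x:ℂ)^4 * Complex.I^2 + (-3/4 : ℂ) * Complex.I^3 + (-5/1 : ℂ) * (x:ℂ)^1 * Complex.I^3 + (-49/16 : ℂ) * (x:ℂ)^2 * Complex.I^3 +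 (-11/4 : ℂ) * (x:ℂ)^3 * Complex.I^3 + (7/4 : ℂ) * Complex.I^4 + (75/32 : ℂ) * (x:ℂ)^1 * Complex.I^4 + (23/16 : ℂ) * (x:ℂ)^2 * Complex.I^4 + (15/32 : ℂ) * Complex.I^5 + (11/8 : ℂ) * (x:ℂ)^1 * Complex.I^5 + (-15/16 : ℂ) * Complex.I^6) * Complex.I_sq
    have hD1 : ((x:ℂ)+-I) ≠ 0 := h1x
    have hD2 : ((x:ℂ)+I) ≠ 0 := h2x
    have g1 : ((-19/128 + (15/32) * I) * ((x:ℂ)+-I)^4 * ((x:ℂ)+I)^3) / (((x:ℂ)+-I)^5 * ((x:ℂ)+I)^4)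
        = (-19/128 + (15/32) * I) * (((x:ℂ)+-I) * ((x:ℂ)+I))⁻¹ := by
      field_simp
    have g2 : ((1/4 - I/8) * ((x:ℂ)+-I)^3 * ((x:ℂ)+I)^4) / (((x:ℂ)+-I)^5 * ((x:ℂ)+I)^4)
        = (1/4 - I/8) * (((x : ℂ) + -I) ^ 2)⁻¹ := by
      field_simp
    have g3 : ((-7/16*I) * ((x:ℂ)+-I)^2 * ((x:ℂ)+I)^4) / (((x:ℂ)+-I)^5 * ((x:ℂ)+I)^4)
        = (-7/16 * I) * (((x : ℂ) + -I) ^ 3)⁻¹ := by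
      field_simp
    have g4 : ((-3/16) * ((x:ℂ)+-I) * ((x:ℂ)+I)^4) / (((x:ℂ)+-I)^5 * ((x:ℂ)+I)^4)
        = (-3/16) * (((x : ℂ) + -I) ^ 4)⁻¹ := by
      field_simp
    have g5 : ((1/4 + I/16) * ((x:ℂ)+I)^4) / (((x:ℂ)+-I)^5 * ((x:ℂ)+I)^4)
        = (1/4 + I/16) * (((x : ℂ) + -I) ^ 5)⁻¹ := by
      field_simp
    have g6 : ((-13/128 - 11/32*I) * ((x:ℂ)+-I)^5 * ((x:ℂ)+I)^2) / (((x:ℂ)+-I)^5 * ((x:ℂ)+I)^4)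
        = (-13/128 - 11/32 * I) * (((x : ℂ) + I) ^ 2)⁻¹ := by
      field_simp
    have g7 : ((7/16 - 17/64*I) * ((x:ℂ)+-I)^5 * ((x:ℂ)+I)) / (((x:ℂ)+-I)^5 * ((x:ℂ)+I)^4)
        = (7/16 - 17/64 * I) * (((x : ℂ) + I) ^ 3)⁻¹ := by
      field_simp
    have g8 : ((-1/32 + 3/8*I) * ((x:ℂ)+-I)^5) / (((x:ℂ)+-I)^5 * ((x:ℂ)+I)^4)
        = (-1/32 + 3/8 * I) * (((x : ℂ) + I) ^ 4)⁻¹ := by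
      field_simp
    simp only [hf]
    rw [show (x:ℂ) - I = (x:ℂ) + -I from by ring, hnum, hcast]
    rw [add_div, add_div, add_div, add_div, add_div, add_div, add_div,
      g1, g2, g3, g4, g5, g6, g7, g8]
  -- integrability
  have hint : Integrable f := by
    rw [hfeq]
    have i1 := integrable_inv_one_add_sq.ofReal.const_mul ((-19:ℂ)/128 + (15/32) * I)
    have i2 := (aux_integrable (-I) hreI' himI' 2 (by norm_num)).const_mul ((1:ℂ)/4 - I/8)
    have i3 := (aux_integrable (-I) hreI' himI' 3 (by norm_num)).const_mul (-7/16 * I)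
    have i4 := (aux_integrable (-I) hreI' himI' 4 (by norm_num)).const_mul ((-3:ℂ)/16)
    have i5 := (aux_integrable (-I) hreI' himI' 5 (by norm_num)).const_mul ((1:ℂ)/4 + I/16)
    have i6 := (aux_integrable I hreI himI 2 (by norm_num)).const_mul ((-13:ℂ)/128 - 11/32 * I)
    have i7 := (aux_integrable I hreI himI 3 (by norm_num)).const_mul ((7:ℂ)/16 - 17/64 * I)
    have i8 := (aux_integrable I hreI himI 4 (by norm_num)).const_mul ((-1:ℂ)/32 + 3/8 * I)
    exact ((((((i1.add i2).add i3).add i4).add i5).add i6).add i7).add i8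
  -- derivative
  have hd : ∀ x : ℝ, HasDerivAt F
      ((-19/128 + (15/32) * I) * (((1 + x ^ 2)⁻¹ : ℝ) : ℂ)
      + (1/4 - I/8) * (((x : ℂ) + -I) ^ 2)⁻¹
      + (-7/16 * I) * (((x : ℂ) + -I) ^ 3)⁻¹
      + (-3/16) * (((x : ℂ) + -I) ^ 4)⁻¹
      + (1/4 + I/16) * (((x : ℂ) + -I) ^ 5)⁻¹
      + (-13/128 - 11/32 * I) * (((x : ℂ) + I) ^ 2)⁻¹
      + (7/16 - 17/64 * I) * (((x : ℂ) + I) ^ 3)⁻¹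
      + (-1/32 + 3/8 * I) * (((x : ℂ) + I) ^ 4)⁻¹) x := by
    intro x
    have h1x := h1 x
    have h2x := h2 x
    have E1 : HasDerivAt (fun z : ℂ => z + -I) 1 ((x : ℝ) : ℂ) := (hasDerivAt_id _).add_const (-I)
    have E2 : HasDerivAt (fun z : ℂ => z + I) 1 ((x : ℝ) : ℂ) := (hasDerivAt_id _).add_const I
    have harc : HasDerivAt (fun y : ℝ => ((Real.arctan y : ℝ) : ℂ))
        ((((1 + x ^ 2)⁻¹ : ℝ)) : ℂ) x := (Real.hasDerivAt_arctan' x).ofReal_comp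
    have K1 : HasDerivAt (fun y : ℝ => ((-19:ℂ)/128 + (15/32) * I) * ((Real.arctan y : ℝ) : ℂ))
        ((-19/128 + (15/32) * I) * (((1 + x ^ 2)⁻¹ : ℝ) : ℂ)) x :=
      harc.const_mul _
    have K2 : HasDerivAt (fun y : ℝ => ((-1:ℂ)/4 + I/8) * ((y : ℂ) + -I)⁻¹)
        ((1/4 - I/8) * (((x : ℂ) + -I) ^ 2)⁻¹) x := by
      have h := ((E1.inv h1x).const_mul ((-1:ℂ)/4 + I/8)).comp_ofReal
      convert h using 1
      simp only [Pi.pow_apply, Pi.inv_apply]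
      norm_num
      field_simp
      ring
    have K3 : HasDerivAt (fun y : ℝ => (7/32 * I) * (((y : ℂ) + -I) ^ 2)⁻¹)
        ((-7/16 * I) * (((x : ℂ) + -I) ^ 3)⁻¹) x := by
      have h := (((E1.pow 2).inv (pow_ne_zero 2 h1x)).const_mul ((7:ℂ)/32 * I)).comp_ofReal
      convert h using 1
      simp only [Pi.pow_apply, Pi.inv_apply]
      norm_num
      field_simp
      ring
    have K4 : HasDerivAt (fun y : ℝ => ((1:ℂ)/16) * (((y : ℂ) + -I) ^ 3)⁻¹)
        ((-3/16) * (((x : ℂ) + -I) ^ 4)⁻¹) x := by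
      have h := (((E1.pow 3).inv (pow_ne_zero 3 h1x)).const_mul ((1:ℂ)/16)).comp_ofReal
      convert h using 1
      simp only [Pi.pow_apply, Pi.inv_apply]
      norm_num
      field_simp
    have K5 : HasDerivAt (fun y : ℝ => ((-1:ℂ)/16 - I/64) * (((y : ℂ) + -I) ^ 4)⁻¹)
        ((1/4 + I/16) * (((x : ℂ) + -I) ^ 5)⁻¹) x := by
      have h := (((E1.pow 4).inv (pow_ne_zero 4 h1x)).const_mul ((-1:ℂ)/16 - I/64)).comp_ofReal
      convert h using 1
      simp only [Pi.pow_apply, Pi.inv_apply]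
      norm_num
      field_simp
      ring
    have K6 : HasDerivAt (fun y : ℝ => ((13:ℂ)/128 + 11/32 * I) * ((y : ℂ) + I)⁻¹)
        ((-13/128 - 11/32 * I) * (((x : ℂ) + I) ^ 2)⁻¹) x := by
      have h := ((E2.inv h2x).const_mul ((13:ℂ)/128 + 11/32 * I)).comp_ofReal
      convert h using 1
      simp only [Pi.pow_apply, Pi.inv_apply]
      norm_num
      field_simp
      ring
    have K7 : HasDerivAt (fun y : ℝ => ((-7:ℂ)/32 + 17/128 * I) * (((y : ℂ) + I) ^ 2)⁻¹)
        ((7/16 - 17/64 * I) * (((x : ℂ) + I) ^ 3)⁻¹) x := by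
      have h := (((E2.pow 2).inv (pow_ne_zero 2 h2x)).const_mul ((-7:ℂ)/32 + 17/128 * I)).comp_ofReal
      convert h using 1
      simp only [Pi.pow_apply, Pi.inv_apply]
      norm_num
      field_simp
      ring
    have K8 : HasDerivAt (fun y : ℝ => ((1:ℂ)/96 - I/8) * (((y : ℂ) + I) ^ 3)⁻¹)
        ((-1/32 + 3/8 * I) * (((x : ℂ) + I) ^ 4)⁻¹) x := by
      have h := (((E2.pow 3).inv (pow_ne_zero 3 h2x)).const_mul ((1:ℂ)/96 - I/8)).comp_ofReal
      convert h using 1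
      simp only [Pi.pow_apply, Pi.inv_apply]
      norm_num
      field_simp
      ring
    exact ((((((K1.add K2).add K3).add K4).add K5).add K6).add K7).add K8
  have hderiv : ∀ x : ℝ, HasDerivAt F (f x) x := by
    intro x
    have h := hd x
    rw [hfeq]
    exact h
  -- limits
  have harctop : Tendsto (fun x : ℝ => ((Real.arctan x : ℝ) : ℂ)) atTop
      (𝓝 ((Real.pi / 2 : ℝ) : ℂ)) :=
    (Complex.continuous_ofReal.tendsto _).comp
      (tendsto_nhds_of_tendsto_nhdsWithin Real.tendsto_arctan_atTop)
  have harcbot : Tendsto (fun x : ℝ => ((Real.arctan x : ℝ) : ℂ)) atBot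
      (𝓝 ((-(Real.pi / 2) : ℝ) : ℂ)) :=
    (Complex.continuous_ofReal.tendsto _).comp
      (tendsto_nhds_of_tendsto_nhdsWithin Real.tendsto_arctan_atBot)
  have htop : Tendsto F atTop (𝓝 ((-19/128 + (15/32) * I) * ((Real.pi / 2 : ℝ) : ℂ))) := by
    have t1 := harctop.const_mul ((-19:ℂ)/128 + (15/32) * I)
    have t2 := (aux_tendsto_atTop (-I) hreI' himI' 1 le_rfl).const_mul ((-1:ℂ)/4 + I/8)
    have t3 := (aux_tendsto_atTop (-I) hreI' himI' 2 one_le_two).const_mul (7/32 * I)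
    have t4 := (aux_tendsto_atTop (-I) hreI' himI' 3 (by norm_num)).const_mul ((1:ℂ)/16)
    have t5 := (aux_tendsto_atTop (-I) hreI' himI' 4 (by norm_num)).const_mul ((-1:ℂ)/16 - I/64)
    have t6 := (aux_tendsto_atTop I hreI himI 1 le_rfl).const_mul ((13:ℂ)/128 + 11/32 * I)
    have t7 := (aux_tendsto_atTop I hreI himI 2 one_le_two).const_mul ((-7:ℂ)/32 + 17/128 * I)
    have t8 := (aux_tendsto_atTop I hreI himI 3 (by norm_num)).const_mul ((1:ℂ)/96 - I/8)
    have h := ((((((t1.add t2).add t3).add t4).add t5).add t6).add t7).add t8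
    rw [hF]
    convert h using 2 <;> simp
  have hbot : Tendsto F atBot (𝓝 ((-19/128 + (15/32) * I) * ((-(Real.pi / 2) : ℝ) : ℂ))) := by
    have t1 := harcbot.const_mul ((-19:ℂ)/128 + (15/32) * I)
    have t2 := (aux_tendsto_atBot (-I) hreI' himI' 1 le_rfl).const_mul ((-1:ℂ)/4 + I/8)
    have t3 := (aux_tendsto_atBot (-I) hreI' himI' 2 one_le_two).const_mul (7/32 * I)
    have t4 := (aux_tendsto_atBot (-I) hreI' himI' 3 (by norm_num)).const_mul ((1:ℂ)/16)
    have t5 := (aux_tendsto_atBot (-I) hreI' himI' 4 (by norm_num)).const_mul ((-1:ℂ)/16 - I/64)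
    have t6 := (aux_tendsto_atBot I hreI himI 1 le_rfl).const_mul ((13:ℂ)/128 + 11/32 * I)
    have t7 := (aux_tendsto_atBot I hreI himI 2 one_le_two).const_mul ((-7:ℂ)/32 + 17/128 * I)
    have t8 := (aux_tendsto_atBot I hreI himI 3 (by norm_num)).const_mul ((1:ℂ)/96 - I/8)
    have h := ((((((t1.add t2).add t3).add t4).add t5).add t6).add t7).add t8
    rw [hF]
    convert h using 2 <;> simp
  have key := MeasureTheory.integral_of_hasDerivAt_of_tendsto hderiv hint hbot htop
  rw [key]
  push_cast
  ring
end

section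
/- The integral over the real line ∫_ℝ (−2ix² − x + i)/((x − i)⁴(x + i)³) dx equals −π/4. -/
open Complex Real

private lemma aux_xsubI_ne (x : ℝ) : (x:ℂ) - I ≠ 0 := by
  intro h
  have := congrArg Complex.im h
  simp at this

private lemma aux_xaddI_ne (x : ℝ) : (x:ℂ) + I ≠ 0 := by
  intro h
  have := congrArg Complex.im h
  simp at this

/-- The explicit antiderivative. -/
noncomputable def auxF (x : ℝ) : ℂ :=
  -(1/4 : ℂ) * (Real.arctan x : ℂ) + (1/12 : ℂ) * (((x:ℂ) - I)^3)⁻¹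
    - (1/16 : ℂ) * ((x:ℂ) - I)⁻¹ - (I/8 : ℂ) * (((x:ℂ) + I)^2)⁻¹
    - (3/16 : ℂ) * ((x:ℂ) + I)⁻¹

private lemma aux_pf_poly (x : ℝ) :
    (-2 * I * (x : ℂ) ^ 2 - (x : ℂ) + I) =
      -(1/4 : ℂ) * ((x:ℂ)+I)^3 + (1/16 : ℂ) * ((x:ℂ)-I)^2 * ((x:ℂ)+I)^3
        - (1/4 : ℂ) * ((x:ℂ)-I)^3 * ((x:ℂ)+I)^2 + (I/4 : ℂ) * ((x:ℂ)-I)^4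
        + (3/16 : ℂ) * ((x:ℂ)-I)^4 * ((x:ℂ)+I) := by
  linear_combination (I - (3/4 : ℂ) * I^3 - (x:ℂ) + (7/4 : ℂ) * (x:ℂ) * I^2
    - (5/4 : ℂ) * (x:ℂ)^2 * I + (1/4 : ℂ) * (x:ℂ)^3) * Complex.I_sq

private lemma aux_one_add_sq (x : ℝ) :
    ((1 + x^2 : ℝ) : ℂ) = ((x:ℂ) - I) * ((x:ℂ) + I) := by
  push_cast
  linear_combination Complex.I_sq

private lemma aux_hasDerivAt (x : ℝ) :
    HasDerivAt auxF
      ((-2 * I * (x : ℂ) ^ 2 - (x : ℂ) + I) / (((x : ℂ) - I) ^ 4 * ((x : ℂ) + I) ^ 3)) x := by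
  have hm := aux_xsubI_ne x
  have hp := aux_xaddI_ne x
  have d1 : HasDerivAt (fun y : ℝ => -(1/4 : ℂ) * (Real.arctan y : ℂ))
      (-(1/4 : ℂ) * ((1/(1+x^2) : ℝ) : ℂ)) x :=
    ((Real.hasDerivAt_arctan x).ofReal_comp).const_mul _
  have c2 : HasDerivAt (fun z : ℂ => (1/12 : ℂ) * ((z - I)^3)⁻¹)
      ((1/12 : ℂ) * (-((3:ℕ) * ((x:ℂ) - I)^(3-1) * 1) / (((x:ℂ) - I)^3)^2)) (x:ℂ) :=
    ((((hasDerivAt_id ((x:ℂ))).sub_const I).pow 3).inv (pow_ne_zero _ hm)).const_mul _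
  have c3 : HasDerivAt (fun z : ℂ => (1/16 : ℂ) * (z - I)⁻¹)
      ((1/16 : ℂ) * (-1 / ((x:ℂ) - I)^2)) (x:ℂ) :=
    (((hasDerivAt_id ((x:ℂ))).sub_const I).inv hm).const_mul _
  have c4 : HasDerivAt (fun z : ℂ => (I/8 : ℂ) * ((z + I)^2)⁻¹)
      ((I/8 : ℂ) * (-((2:ℕ) * ((x:ℂ) + I)^(2-1) * 1) / (((x:ℂ) + I)^2)^2)) (x:ℂ) :=
    ((((hasDerivAt_id ((x:ℂ))).add_const I).pow 2).inv (pow_ne_zero _ hp)).const_mul _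
  have c5 : HasDerivAt (fun z : ℂ => (3/16 : ℂ) * (z + I)⁻¹)
      ((3/16 : ℂ) * (-1 / ((x:ℂ) + I)^2)) (x:ℂ) :=
    (((hasDerivAt_id ((x:ℂ))).add_const I).inv hp).const_mul _
  have c2' : HasDerivAt (fun y : ℝ => (1/12 : ℂ) * (((y:ℂ) - I)^3)⁻¹)
      (-(1/4 : ℂ) * ((((x:ℂ) - I)^4)⁻¹)) x := by
    convert c2.comp_ofReal using 1
    field_simp
    ring
  have c3' : HasDerivAt (fun y : ℝ => (1/16 : ℂ) * (((y:ℂ) - I))⁻¹)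
      (-(1/16 : ℂ) * ((((x:ℂ) - I)^2)⁻¹)) x := by
    convert c3.comp_ofReal using 1
    field_simp
  have c4' : HasDerivAt (fun y : ℝ => (I/8 : ℂ) * (((y:ℂ) + I)^2)⁻¹)
      (-(I/4 : ℂ) * ((((x:ℂ) + I)^3)⁻¹)) x := by
    convert c4.comp_ofReal using 1
    field_simp
    ring
  have c5' : HasDerivAt (fun y : ℝ => (3/16 : ℂ) * (((y:ℂ) + I))⁻¹)
      (-(3/16 : ℂ) * ((((x:ℂ) + I)^2)⁻¹)) x := by
    convert c5.comp_ofReal using 1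
    field_simp
  have H := (((d1.add c2').sub c3').sub c4').sub c5'
  convert H using 1
  · rfl
  · rfl
  rw [aux_pf_poly x]
  have e1 : ((1/(1+x^2) : ℝ) : ℂ) = (((x:ℂ) - I) * ((x:ℂ) + I))⁻¹ := by
    rw [← aux_one_add_sq x]
    push_cast [one_div]
    ring_nf
  rw [e1]
  generalize hu : (x:ℂ) - I = u at hm ⊢
  generalize hv : (x:ℂ) + I = v at hp ⊢
  have hD : u^4 * v^3 ≠ 0 := mul_ne_zero (pow_ne_zero _ hm) (pow_ne_zero _ hp)
  have e2 : -(1/4 : ℂ) * ((u*v))⁻¹ = (-(1/4:ℂ)*u^3*v^2)/(u^4*v^3) := by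
    rw [mul_inv_eq_iff_eq_mul₀ (mul_ne_zero hm hp), div_mul_eq_mul_div,
      eq_div_iff hD]
    ring
  have e3 : -(1/4 : ℂ) * (u^4)⁻¹ = (-(1/4:ℂ)*v^3)/(u^4*v^3) := by
    rw [mul_inv_eq_iff_eq_mul₀ (pow_ne_zero _ hm), div_mul_eq_mul_div, eq_div_iff hD]
    ring
  have e4 : -(1/16 : ℂ) * (u^2)⁻¹ = (-(1/16:ℂ)*u^2*v^3)/(u^4*v^3) := by
    rw [mul_inv_eq_iff_eq_mul₀ (pow_ne_zero _ hm), div_mul_eq_mul_div, eq_div_iff hD]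
    ring
  have e5 : -(I/4 : ℂ) * (v^3)⁻¹ = (-(I/4:ℂ)*u^4)/(u^4*v^3) := by
    rw [mul_inv_eq_iff_eq_mul₀ (pow_ne_zero _ hp), div_mul_eq_mul_div, eq_div_iff hD]
    ring
  have e6 : -(3/16 : ℂ) * (v^2)⁻¹ = (-(3/16:ℂ)*u^4*v)/(u^4*v^3) := by
    rw [mul_inv_eq_iff_eq_mul₀ (pow_ne_zero _ hp), div_mul_eq_mul_div, eq_div_iff hD]
    ring
  rw [e2, e3, e4, e5, e6, ← add_div, div_sub_div_same, div_sub_div_same,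
    div_sub_div_same]
  congr 1
  ring

private lemma aux_normsq_sub (x : ℝ) : ‖(x:ℂ) - I‖^2 = x^2 + 1 := by
  rw [Complex.sq_norm, Complex.normSq_apply]
  simp
  ring

private lemma aux_normsq_add (x : ℝ) : ‖(x:ℂ) + I‖^2 = x^2 + 1 := by
  rw [Complex.sq_norm, Complex.normSq_apply]
  simp
  ring

open Filter MeasureTheory in
private lemma aux_integrable_s17 :
    Integrable (fun x : ℝ =>
      (-2 * I * (x : ℂ) ^ 2 - (x : ℂ) + I) / (((x : ℂ) - I) ^ 4 * ((x : ℂ) + I) ^ 3)) := by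
  have hcont : Continuous (fun x : ℝ =>
      (-2 * I * (x : ℂ) ^ 2 - (x : ℂ) + I) / (((x : ℂ) - I) ^ 4 * ((x : ℂ) + I) ^ 3)) := by
    apply Continuous.div
    · continuity
    · continuity
    · intro x
      exact mul_ne_zero (pow_ne_zero _ (aux_xsubI_ne x)) (pow_ne_zero _ (aux_xaddI_ne x))
  apply Integrable.mono' ((integrable_inv_one_add_sq).const_mul 3)
    hcont.aestronglyMeasurable
  filter_upwards with x
  have h1 : (0:ℝ) < 1 + x^2 := by positivity
  have hm2 : ‖(x:ℂ) - I‖^2 = x^2 + 1 := aux_normsq_sub x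
  have hp2 : ‖(x:ℂ) + I‖^2 = x^2 + 1 := aux_normsq_add x
  have hm1 : (1:ℝ) ≤ ‖(x:ℂ) - I‖ := by nlinarith [norm_nonneg ((x:ℂ) - I), sq_nonneg x]
  have hp1 : (1:ℝ) ≤ ‖(x:ℂ) + I‖ := by nlinarith [norm_nonneg ((x:ℂ) + I), sq_nonneg x]
  have hden : (1 + x^2)^2 ≤ ‖(((x : ℂ) - I) ^ 4 * ((x : ℂ) + I) ^ 3)‖ := by
    rw [norm_mul, norm_pow, norm_pow]
    have e1 : ‖(x:ℂ) - I‖^4 = (x^2+1)^2 := by rw [show (4:ℕ) = 2*2 from rfl, pow_mul, hm2]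
    have e2 : (x^2+1) ≤ ‖(x:ℂ) + I‖^3 := by
      calc (x^2+1) = ‖(x:ℂ) + I‖^2 * 1 := by rw [hp2]; ring
      _ ≤ ‖(x:ℂ) + I‖^2 * ‖(x:ℂ) + I‖ := by
          apply mul_le_mul_of_nonneg_left hp1 (by positivity)
      _ = ‖(x:ℂ) + I‖^3 := by ring
    calc (1 + x^2)^2 = (x^2+1)^2 * 1 := by ring
    _ ≤ (x^2+1)^2 * (x^2+1) := by nlinarith
    _ ≤ ‖(x:ℂ) - I‖^4 * ‖(x:ℂ) + I‖^3 := by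
        rw [e1]
        exact mul_le_mul_of_nonneg_left e2 (by positivity)
  have hnum : ‖(-2 * I * (x : ℂ) ^ 2 - (x : ℂ) + I)‖ ≤ 3 * (1 + x^2) := by
    calc ‖(-2 * I * (x : ℂ) ^ 2 - (x : ℂ) + I)‖
        ≤ ‖(-2 * I * (x : ℂ) ^ 2 - (x : ℂ))‖ + ‖I‖ := norm_add_le _ _
      _ ≤ ‖(-2 * I * (x : ℂ) ^ 2)‖ + ‖(x:ℂ)‖ + ‖I‖ := by
          have := norm_sub_le (-2 * I * (x : ℂ) ^ 2) ((x:ℂ))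
          linarith
      _ = 2 * x^2 + |x| + 1 := by
          simp [norm_mul, Complex.norm_real, norm_pow, sq_abs]
      _ ≤ 3 * (1 + x^2) := by nlinarith [abs_nonneg x, _root_.sq_abs x]
  rw [norm_div]
  rw [div_le_iff₀ (by nlinarith)]
  calc ‖(-2 * I * (x : ℂ) ^ 2 - (x : ℂ) + I)‖ ≤ 3 * (1 + x^2) := hnum
    _ = 3 * (1+x^2)⁻¹ * (1+x^2)^2 := by field_simp
    _ ≤ 3 * (1+x^2)⁻¹ * ‖(((x : ℂ) - I) ^ 4 * ((x : ℂ) + I) ^ 3)‖ := by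
        apply mul_le_mul_of_nonneg_left hden (by positivity)

open Filter in
private lemma aux_tendsto_inv_pow (a : ℂ) {n : ℕ} (hn : n ≠ 0) {l : Filter ℝ}
    (h : Tendsto (fun x : ℝ => ‖(x:ℂ) + a‖) l atTop) (c : ℂ) :
    Tendsto (fun x : ℝ => c * (((x:ℂ) + a)^n)⁻¹) l (nhds 0) := by
  have h2 : Tendsto (fun x : ℝ => ‖((x:ℂ) + a)^n‖) l atTop := by
    simpa only [norm_pow, Function.comp_def] using (tendsto_pow_atTop hn).comp h
  have h4 : Tendsto (fun x : ℝ => (((x:ℂ) + a)^n)⁻¹) l (nhds 0) := by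
    rw [tendsto_zero_iff_norm_tendsto_zero]
    simpa only [norm_inv, Pi.inv_def] using h2.inv_tendsto_atTop
  simpa using h4.const_mul c

open Filter in
private lemma aux_norm_tendsto (a : ℂ) {l : Filter ℝ}
    (h : Tendsto (fun x : ℝ => |x|) l atTop) :
    Tendsto (fun x : ℝ => ‖(x:ℂ) + a‖) l atTop := by
  apply tendsto_atTop_mono (f := fun x : ℝ => |x| - ‖a‖)
  · intro x
    have : ‖(x:ℂ)‖ ≤ ‖(x:ℂ) + a‖ + ‖a‖ := by
      calc ‖(x:ℂ)‖ = ‖((x:ℂ) + a) - a‖ := by ring_nf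
        _ ≤ ‖(x:ℂ) + a‖ + ‖a‖ := norm_sub_le _ _
    rw [Complex.norm_real, Real.norm_eq_abs] at this
    linarith
  · exact tendsto_atTop_add_const_right l (-‖a‖) h

open Filter in
private lemma aux_tendsto_F_top : Tendsto auxF atTop (nhds (-((Real.pi : ℂ)/8))) := by
  have habs : Tendsto (fun x : ℝ => |x|) atTop atTop :=
    tendsto_abs_atTop_atTop
  have hm : Tendsto (fun x : ℝ => ‖(x:ℂ) + (-I)‖) atTop atTop := aux_norm_tendsto (-I) habs
  have hp : Tendsto (fun x : ℝ => ‖(x:ℂ) + I‖) atTop atTop := aux_norm_tendsto I habs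
  have harc : Tendsto (fun x : ℝ => -(1/4 : ℂ) * (Real.arctan x : ℂ)) atTop
      (nhds (-(1/4 : ℂ) * ((Real.pi/2 : ℝ) : ℂ))) := by
    exact (((Complex.continuous_ofReal.tendsto _).comp
      (tendsto_nhds_of_tendsto_nhdsWithin Real.tendsto_arctan_atTop)).const_mul _)
  have t2 := aux_tendsto_inv_pow (-I) (three_ne_zero) hm (1/12 : ℂ)
  have t3 := aux_tendsto_inv_pow (-I) (one_ne_zero) hm (1/16 : ℂ)
  have t4 := aux_tendsto_inv_pow I (two_ne_zero) hp (I/8 : ℂ)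
  have t5 := aux_tendsto_inv_pow I (one_ne_zero) hp (3/16 : ℂ)
  simp only [← sub_eq_add_neg, pow_one] at t2 t3 t4 t5
  have h0 : (-(1/4 : ℂ) * ((Real.pi/2 : ℝ) : ℂ) + 0 - 0 - 0 - 0) = -((Real.pi : ℂ)/8) := by
    push_cast; ring
  have := (((harc.add t2).sub t3).sub t4).sub t5
  rw [h0] at this
  exact this

open Filter in
private lemma aux_tendsto_F_bot : Tendsto auxF atBot (nhds ((Real.pi : ℂ)/8)) := by
  have habs : Tendsto (fun x : ℝ => |x|) atBot atTop := by
    simpa using tendsto_abs_atBot_atTop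
  have hm : Tendsto (fun x : ℝ => ‖(x:ℂ) + (-I)‖) atBot atTop := aux_norm_tendsto (-I) habs
  have hp : Tendsto (fun x : ℝ => ‖(x:ℂ) + I‖) atBot atTop := aux_norm_tendsto I habs
  have harc : Tendsto (fun x : ℝ => -(1/4 : ℂ) * (Real.arctan x : ℂ)) atBot
      (nhds (-(1/4 : ℂ) * ((-(Real.pi/2) : ℝ) : ℂ))) := by
    exact (((Complex.continuous_ofReal.tendsto _).comp
      (tendsto_nhds_of_tendsto_nhdsWithin Real.tendsto_arctan_atBot)).const_mul _)
  have t2 := aux_tendsto_inv_pow (-I) (three_ne_zero) hm (1/12 : ℂ)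
  have t3 := aux_tendsto_inv_pow (-I) (one_ne_zero) hm (1/16 : ℂ)
  have t4 := aux_tendsto_inv_pow I (two_ne_zero) hp (I/8 : ℂ)
  have t5 := aux_tendsto_inv_pow I (one_ne_zero) hp (3/16 : ℂ)
  simp only [← sub_eq_add_neg, pow_one] at t2 t3 t4 t5
  have h0 : (-(1/4 : ℂ) * ((-(Real.pi/2) : ℝ) : ℂ) + 0 - 0 - 0 - 0) = ((Real.pi : ℂ)/8) := by
    push_cast; ring
  have := (((harc.add t2).sub t3).sub t4).sub t5
  rw [h0] at this
  exact this

theorem stmt_17 :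
    ∫ x : ℝ, (-2 * I * (x : ℂ) ^ 2 - (x : ℂ) + I) / (((x : ℂ) - I) ^ 4 * ((x : ℂ) + I) ^ 3) = -((Real.pi : ℂ) / 4) := by
  rw [MeasureTheory.integral_of_hasDerivAt_of_tendsto aux_hasDerivAt aux_integrable_s17
    aux_tendsto_F_bot aux_tendsto_F_top]
  ring
end
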